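/- For every unit c of ℤ/p^kℤ, one has the identity 2·ε·Σ b² = −(p+1)·p^{k−1}·c in ℤ/p^kℤ, where the sum runs over all pairs (a, b) ∈ (ℤ/p^kℤ)² satisfying a² − εb² = c. -/

import Mathlib

open Finset

namespace SumSqAux

variable (p k : ℕ) [hp : Fact p.Prime]

/-- reduction map `ZMod (p^k) → ZMod p`. -/
def red (hk0 : k ≠ 0) : ZMod (p ^ k) →+* ZMod p :=
  ZMod.castHom (dvd_pow_self p hk0) (ZMod p)

lemma red_natCast (hk0 : k ≠ 0) (m : ℕ) : red p k hk0 (m : ZMod (p ^ k)) = (m : ZMod p) :=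
  map_natCast _ m

lemma red_val (hk0 : k ≠ 0) (x : ZMod (p ^ k)) : red p k hk0 x = (x.val : ZMod p) := by
  haveI : NeZero (p ^ k) := ⟨pow_ne_zero _ hp.out.pos.ne'⟩
  conv_lhs => rw [← ZMod.natCast_zmod_val x]
  exact red_natCast p k hk0 x.val

lemma isUnit_iff_red (hk0 : k ≠ 0) (x : ZMod (p ^ k)) :
    IsUnit x ↔ red p k hk0 x ≠ 0 := by
  haveI : NeZero (p ^ k) := ⟨pow_ne_zero _ hp.out.pos.ne'⟩
  rw [red_val, Ne, ZMod.natCast_eq_zero_iff]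
  conv_lhs => rw [← ZMod.natCast_zmod_val x]
  rw [ZMod.isUnit_iff_coprime]
  constructor
  · intro h hdvd
    have := Nat.Coprime.coprime_dvd_right (dvd_pow_self p hk0) h
    exact hp.out.one_lt.ne' ((Nat.coprime_comm.mp this).eq_one_of_dvd  hdvd)
  · intro h
    exact Nat.Coprime.pow_right _ ((Nat.coprime_comm.mp (hp.out.coprime_iff_not_dvd.mpr h)))

lemma sq_lift_int (hodd : Odd p) (a : ℤ) (ha : ¬ (p : ℤ) ∣ a)
    (h0 : ∃ z : ℤ, (p : ℤ) ∣ a - z ^ 2) :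
    ∀ j : ℕ, ∃ z : ℤ, (p : ℤ) ^ (j + 1) ∣ a - z ^ 2 := by
  intro j
  induction j with
  | zero => simpa using h0
  | succ j ih =>
    obtain ⟨z, hz⟩ := ih
    have hpz : ¬ (p : ℤ) ∣ z := by
      intro h
      apply ha
      have h1 : (p : ℤ) ∣ a - z ^ 2 :=
        dvd_trans (dvd_pow_self _ (Nat.succ_ne_zero j)) hz
      have h2 : (p : ℤ) ∣ z ^ 2 := Dvd.dvd.pow h (by norm_num)
      have := dvd_add h1 h2
      simpa using this
    obtain ⟨m, hm⟩ := hz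
    have h2z : ((2 * z : ℤ) : ZMod p) ≠ 0 := by
      rw [Ne, ZMod.intCast_zmod_eq_zero_iff_dvd]
      intro h
      rcases (Int.Prime.dvd_mul' hp.out h) with h' | h'
      · have : (p : ℤ) ∣ 2 := h'
        have h2 : p ∣ 2 := by exact_mod_cast this
        have h3 := Nat.le_of_dvd (by norm_num) h2
        have h4 := hp.out.two_le
        have h5 := Nat.odd_iff.mp hodd
        omega
      · exact hpz h'
    set t : ℤ := ((((m : ZMod p)) * ((2 * z : ℤ) : ZMod p)⁻¹).val : ℤ) with ht
    have hft : (p : ℤ) ∣ 2 * z * t - m := by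
      rw [← ZMod.intCast_zmod_eq_zero_iff_dvd]
      have htt : ((t : ℤ) : ZMod p) = ((m : ZMod p)) * ((2 * z : ℤ) : ZMod p)⁻¹ := by
        rw [ht]
        push_cast
        exact ZMod.natCast_zmod_val _
      have key : ((2 * z : ℤ) : ZMod p) * (((m : ZMod p)) * ((2 * z : ℤ) : ZMod p)⁻¹)
          = (m : ZMod p) := by
        rw [mul_comm ((m : ZMod p)) _, ← mul_assoc, mul_inv_cancel₀ h2z, one_mul]
      push_cast at htt key ⊢
      rw [htt]
      linear_combination key
    obtain ⟨s, hs⟩ := hft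
    refine ⟨z + (p : ℤ) ^ (j + 1) * t, ⟨-s - (p : ℤ) ^ j * t ^ 2, ?_⟩⟩
    linear_combination hm - (p : ℤ) ^ (j + 1) * hs

lemma isSquare_lift (hodd : Odd p) (hk0 : k ≠ 0) (x : ZMod (p ^ k)) (hu : IsUnit x)
    (hs : IsSquare (red p k hk0 x)) : IsSquare x := by
  haveI : NeZero (p ^ k) := ⟨pow_ne_zero _ hp.out.pos.ne'⟩
  set a : ℤ := (x.val : ℤ) with hadef
  have hxa : ((a : ℤ) : ZMod (p ^ k)) = x := by
    rw [hadef]; push_cast; exact ZMod.natCast_zmod_val x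
  have hared : ((a : ℤ) : ZMod p) = red p k hk0 x := by
    rw [hadef, red_val]; push_cast; rfl
  have ha : ¬ (p : ℤ) ∣ a := by
    rw [← ZMod.intCast_zmod_eq_zero_iff_dvd, hared]
    exact (isUnit_iff_red p k hk0 x).mp hu
  obtain ⟨y, hy⟩ := hs
  have h0 : ∃ z : ℤ, (p : ℤ) ∣ a - z ^ 2 := by
    refine ⟨(y.val : ℤ), ?_⟩
    rw [← ZMod.intCast_zmod_eq_zero_iff_dvd]
    push_cast
    rw [hared, hy, ZMod.natCast_zmod_val]
    ring
  obtain ⟨z, hz⟩ := sq_lift_int p hodd a ha h0 (k - 1)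
  rw [Nat.sub_add_cancel (Nat.one_le_iff_ne_zero.mpr hk0)] at hz
  refine ⟨(z : ZMod (p ^ k)), ?_⟩
  have hzz : ((a - z ^ 2 : ℤ) : ZMod (p ^ k)) = 0 := by
    rw [ZMod.intCast_zmod_eq_zero_iff_dvd]
    exact_mod_cast hz
  push_cast at hzz
  rw [hxa] at hzz
  linear_combination hzz


open Polynomial in
lemma exists_sol_modp (hodd : Odd p) (e : ZMod p) (he : e ≠ 0) (c : ZMod p) :
    ∃ a b : ZMod p, a ^ 2 - e * b ^ 2 = c := by
  obtain ⟨a, b, hab⟩ := FiniteField.exists_root_sum_quadratic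
    (f := (X : (ZMod p)[X]) ^ 2 - C c) (g := C (-e) * X ^ 2)
    (degree_X_pow_sub_C (by norm_num) c)
    (by rw [degree_C_mul_X_pow _ (neg_ne_zero.mpr he)]; rfl)
    (by rw [ZMod.card p]; exact Nat.odd_iff.mp hodd)
  refine ⟨a, b, ?_⟩
  simp only [eval_sub, eval_pow, eval_X, eval_C, eval_mul, eval_neg] at hab
  linear_combination hab

lemma heps0 (ε : ℤ) (hε : ¬ IsSquare ((ε : ZMod p))) : (ε : ZMod p) ≠ 0 := fun h => hε (h ▸ ⟨0, by ring⟩)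

lemma red_eps (hk0 : k ≠ 0) (ε : ℤ) : red p k hk0 ((ε : ZMod (p ^ k))) = (ε : ZMod p) := map_intCast _ ε

lemma heps_unit (hk0 : k ≠ 0) (ε : ℤ) (hε : ¬ IsSquare ((ε : ZMod p))) : IsUnit ((ε : ZMod (p ^ k))) := by
  rw [isUnit_iff_red p k hk0, red_eps]
  exact heps0 p ε hε

lemma two_ne_zero_modp (hodd : Odd p) : (2 : ZMod p) ≠ 0 := by
  have : ((2 : ℕ) : ZMod p) ≠ 0 := by
    rw [Ne, ZMod.natCast_eq_zero_iff]
    intro h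
    have h3 := Nat.le_of_dvd (by norm_num) h
    have h4 := hp.out.two_le
    have h5 := Nat.odd_iff.mp hodd
    omega
  exact_mod_cast this

lemma two_unit (hodd : Odd p) (hk0 : k ≠ 0) : IsUnit ((2 : ZMod (p ^ k))) := by
  rw [isUnit_iff_red p k hk0]
  have : red p k hk0 ((2 : ZMod (p ^ k))) = (2 : ZMod p) := map_ofNat _ 2
  rw [this]
  exact two_ne_zero_modp p hodd

/-- existence of a base solution. -/
lemma exists_sol (hodd : Odd p) (hk0 : k ≠ 0) (ε : ℤ) (hε : ¬ IsSquare ((ε : ZMod p))) (c : (ZMod (p ^ k))ˣ) :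
    ∃ a b : ZMod (p ^ k), a ^ 2 - (ε : ZMod (p ^ k)) * b ^ 2 = (c : ZMod (p ^ k)) := by
  haveI : NeZero (p ^ k) := ⟨pow_ne_zero _ hp.out.pos.ne'⟩
  obtain ⟨a₀, b₀, hab₀⟩ := exists_sol_modp p hodd ((ε : ZMod p)) (heps0 p ε hε)
    (red p k hk0 (c : ZMod (p ^ k)))
  have hcu : red p k hk0 ((c : ZMod (p ^ k))) ≠ 0 :=
    (isUnit_iff_red p k hk0 _).mp c.isUnit
  by_cases ha0 : a₀ = 0
  · -- take a = 0, solve -ε b² = c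
    obtain ⟨w, hw⟩ := (heps_unit p k hk0 ε hε).exists_right_inv
    have hb₀ : b₀ ≠ 0 := by
      intro h
      rw [ha0, h] at hab₀
      apply hcu
      rw [← hab₀]; ring
    have hured : red p k hk0 (-(c : ZMod (p ^ k)) * w) = b₀ * b₀ := by
      have h1 : red p k hk0 (-(c : ZMod (p ^ k)) * w)
          = -(red p k hk0 (c : ZMod (p ^ k))) * red p k hk0 w := by
        rw [map_mul, map_neg]
      have h2 : (ε : ZMod p) * red p k hk0 w = 1 := by
        rw [← red_eps p k hk0, ← map_mul, hw, map_one]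
      have h3 : red p k hk0 (c : ZMod (p ^ k)) = -(ε : ZMod p) * b₀ ^ 2 := by
        rw [← hab₀, ha0]; ring
      rw [h1, h3]
      linear_combination (b₀ ^ 2) * h2
    have hu_unit : IsUnit (-(c : ZMod (p ^ k)) * w) := by
      rw [isUnit_iff_red p k hk0, hured]
      exact fun h => hb₀ (by
        rcases mul_self_eq_zero.mp h with h'
        exact h')
    obtain ⟨b, hb⟩ := isSquare_lift p k hodd hk0 _ hu_unit ⟨b₀, hured⟩
    refine ⟨0, b, ?_⟩
    have hw2 : (ε : ZMod (p ^ k)) * w = 1 := hw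
    linear_combination (ε : ZMod (p ^ k)) * hb + (c : ZMod (p ^ k)) * hw2
  · -- a₀ ≠ 0 : lift b₀, solve a² = c + ε b²
    set b : ZMod (p ^ k) := ((b₀.val : ℕ) : ZMod (p ^ k)) with hbdef
    have hredb : red p k hk0 b = b₀ := by
      rw [hbdef, red_natCast, ZMod.natCast_zmod_val]
    have hured : red p k hk0 ((c : ZMod (p ^ k)) + (ε : ZMod (p ^ k)) * b ^ 2) = a₀ * a₀ := by
      rw [map_add, map_mul, map_pow, hredb, red_eps, ← hab₀]
      ring
    have hu_unit : IsUnit ((c : ZMod (p ^ k)) + (ε : ZMod (p ^ k)) * b ^ 2) := by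
      rw [isUnit_iff_red p k hk0, hured]
      exact fun h => ha0 (mul_self_eq_zero.mp h)
    obtain ⟨a, hauq⟩ := isSquare_lift p k hodd hk0 _ hu_unit ⟨a₀, hured⟩
    refine ⟨a, b, ?_⟩
    rw [pow_two, ← hauq]
    ring

lemma mul_inv_eq_of_eq_mul {n : ℕ} {u a b : ZMod n} (hu : IsUnit u) (h : a = b * u) :
    a * u⁻¹ = b := by
  rw [h, mul_assoc, ZMod.mul_inv_of_unit u hu, mul_one]

lemma tsq_sub_eps_unit (hk0 : k ≠ 0) (ε : ℤ) (hε : ¬ IsSquare ((ε : ZMod p)))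
    (t : ZMod (p ^ k)) : IsUnit (t ^ 2 - (ε : ZMod (p ^ k))) := by
  rw [isUnit_iff_red p k hk0]
  intro h
  apply hε
  refine ⟨red p k hk0 t, ?_⟩
  have : red p k hk0 (t ^ 2 - (ε : ZMod (p ^ k)))
      = (red p k hk0 t) ^ 2 - (ε : ZMod p) := by
    rw [map_sub, map_pow, red_eps]
  rw [this] at h
  linear_combination -h

lemma card_norm_one (hodd : Odd p) (hk : 1 ≤ k) (ε : ℤ) (hε : ¬ IsSquare ((ε : ZMod p))) :
    (univ.filter (fun v : ZMod (p ^ k) × ZMod (p ^ k) =>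
      v.1 ^ 2 - (ε : ZMod (p ^ k)) * v.2 ^ 2 = 1)).card = p ^ k + p ^ (k - 1) := by
  classical
  have hk0 : k ≠ 0 := by omega
  haveI : NeZero (p ^ k) := ⟨pow_ne_zero _ hp.out.pos.ne'⟩
  set E : ZMod (p ^ k) := (ε : ZMod (p ^ k)) with hEdef
  have h2E : IsUnit (2 * E) := (two_unit p k hodd hk0).mul (heps_unit p k hk0 ε hε)
  have hsplit := card_filter_add_card_filter_not
    (s := univ.filter (fun v : ZMod (p ^ k) × ZMod (p ^ k) => v.1 ^ 2 - E * v.2 ^ 2 = 1))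
    (p := fun v => red p k hk0 v.1 = 1)
  rw [filter_filter, filter_filter] at hsplit
  have h1 : (univ.filter (fun v : ZMod (p ^ k) × ZMod (p ^ k) =>
      (v.1 ^ 2 - E * v.2 ^ 2 = 1) ∧ red p k hk0 v.1 = 1)).card = p ^ (k - 1) := by
    have step1 : (univ.filter (fun v : ZMod (p ^ k) × ZMod (p ^ k) =>
        (v.1 ^ 2 - E * v.2 ^ 2 = 1) ∧ red p k hk0 v.1 = 1)).card
        = (univ.filter (fun y : ZMod (p ^ k) => red p k hk0 y = 0)).card := by
      apply Finset.card_bij (fun v _ => v.2)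
      · -- maps to
        intro v hv
        simp only [mem_filter, mem_univ, true_and] at hv ⊢
        obtain ⟨hG, hr⟩ := hv
        have h3 : (red p k hk0 v.1) ^ 2 - (ε : ZMod p) * (red p k hk0 v.2) ^ 2 = 1 := by
          have := congrArg (red p k hk0) hG
          simpa [map_sub, map_mul, map_pow, map_one, red_eps, hEdef] using this
        rw [hr] at h3
        have h4 : (ε : ZMod p) * (red p k hk0 v.2) ^ 2 = 0 := by linear_combination -h3
        rcases mul_eq_zero.mp h4 with h' | h'
        · exact absurd h' (heps0 p ε hε)
        · exact pow_eq_zero_iff (by norm_num) |>.mp h'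
      · -- injective
        intro v₁ hv₁ v₂ hv₂ heq
        simp only [mem_filter, mem_univ, true_and] at hv₁ hv₂
        obtain ⟨hG₁, hr₁⟩ := hv₁
        obtain ⟨hG₂, hr₂⟩ := hv₂
        have hsum : IsUnit (v₁.1 + v₂.1) := by
          rw [isUnit_iff_red p k hk0, map_add, hr₁, hr₂]
          intro h
          have : (2 : ZMod p) = 0 := by linear_combination h
          exact two_ne_zero_modp p hodd this
        have hmul : (v₁.1 - v₂.1) * (v₁.1 + v₂.1) = 0 := by
          rw [heq] at hG₁
          linear_combination hG₁ - hG₂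
        have : v₁.1 - v₂.1 = 0 := (IsUnit.mul_left_eq_zero hsum).mp hmul
        have h1' : v₁.1 = v₂.1 := by linear_combination this
        exact Prod.ext h1' heq
      · -- surjective
        intro y hy
        simp only [mem_filter, mem_univ, true_and] at hy
        have hredu : red p k hk0 (1 + E * y ^ 2) = 1 := by
          rw [map_add, map_mul, map_pow, map_one, hEdef, red_eps, hy]
          ring
        have huu : IsUnit (1 + E * y ^ 2) := by
          rw [isUnit_iff_red p k hk0, hredu]; exact one_ne_zero
        obtain ⟨s, hs⟩ := isSquare_lift p k hodd hk0 _ huu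
          (⟨1, by rw [hredu]; ring⟩)
        have hsred : red p k hk0 s * red p k hk0 s = 1 := by
          rw [← map_mul, ← hs, hredu]
        rcases mul_self_eq_one_iff.mp hsred with h' | h'
        · refine ⟨(s, y), ?_, rfl⟩
          simp only [mem_filter, mem_univ, true_and]
          exact ⟨by rw [pow_two, ← hs]; ring, h'⟩
        · refine ⟨(-s, y), ?_, rfl⟩
          simp only [mem_filter, mem_univ, true_and]
          constructor
          · have : (-s) ^ 2 = s * s := by ring
            rw [this, ← hs]; ring
          · rw [map_neg, h']; ring
    rw [step1]
    have hmult : (univ.filter (fun y : ZMod (p ^ k) => red p k hk0 y = 0)).card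
        = (Finset.range (p ^ (k - 1))).card := by
      apply Finset.card_nbij' (fun y : ZMod (p ^ k) => y.val / p)
        (fun m : ℕ => ((p * m : ℕ) : ZMod (p ^ k)))
      · intro y _
        rw [Finset.mem_coe, Finset.mem_range, Nat.div_lt_iff_lt_mul hp.out.pos]
        have : p ^ (k - 1) * p = p ^ k := by
          rw [← pow_succ, Nat.sub_add_cancel hk]
        rw [this]
        exact ZMod.val_lt y
      · intro m _
        simp only [mem_coe, mem_filter, mem_univ, true_and]
        rw [red_natCast, ZMod.natCast_eq_zero_iff]
        exact dvd_mul_right p m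
      · intro y hy
        simp only [mem_coe, mem_filter, mem_univ, true_and] at hy
        have hdvd : p ∣ y.val := by
          rw [red_val] at hy
          exact (ZMod.natCast_eq_zero_iff _ _).mp hy
        beta_reduce; rw [Nat.mul_div_cancel' hdvd]
        exact ZMod.natCast_zmod_val y
      · intro m hm
        rw [Finset.mem_coe, Finset.mem_range] at hm
        have hlt : p * m < p ^ k := by
          calc p * m < p * p ^ (k - 1) := by
                exact (Nat.mul_lt_mul_left hp.out.pos).mpr hm
            _ = p ^ k := by rw [← pow_succ', Nat.sub_add_cancel hk]
        beta_reduce; rw [ZMod.val_cast_of_lt hlt]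
        exact Nat.mul_div_cancel_left m hp.out.pos
    rw [hmult, Finset.card_range]
  have h2 : (univ.filter (fun v : ZMod (p ^ k) × ZMod (p ^ k) =>
      (v.1 ^ 2 - E * v.2 ^ 2 = 1) ∧ ¬ red p k hk0 v.1 = 1)).card = p ^ k := by
    have hbij : (univ.filter (fun v : ZMod (p ^ k) × ZMod (p ^ k) =>
        (v.1 ^ 2 - E * v.2 ^ 2 = 1) ∧ ¬ red p k hk0 v.1 = 1)).card
        = (univ : Finset (ZMod (p ^ k))).card := by
      apply Finset.card_nbij' (fun v : ZMod (p ^ k) × ZMod (p ^ k) => E * v.2 * (v.1 - 1)⁻¹)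
        (fun t : ZMod (p ^ k) => ((t ^ 2 + E) * (t ^ 2 - E)⁻¹, 2 * t * (t ^ 2 - E)⁻¹))
      · intro v _; exact mem_univ _
      · -- j t lands in the filter
        intro t _
        simp only [mem_coe, mem_filter, mem_univ, true_and]
        have hdu : IsUnit (t ^ 2 - E) := tsq_sub_eps_unit p k hk0 ε hε t
        have hd : (t ^ 2 - E) * (t ^ 2 - E)⁻¹ = 1 := ZMod.mul_inv_of_unit _ hdu
        constructor
        · linear_combination ((t ^ 2 - E) * (t ^ 2 - E)⁻¹ + 1) * hd
        · have h5 : ((t ^ 2 + E) * (t ^ 2 - E)⁻¹ - 1) * (t ^ 2 - E) = 2 * E := by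
            linear_combination (t ^ 2 + E) * hd
          have hxu : IsUnit ((t ^ 2 + E) * (t ^ 2 - E)⁻¹ - 1) := by
            have h6 := h2E
            rw [← h5] at h6
            exact isUnit_of_mul_isUnit_left h6
          rw [isUnit_iff_red p k hk0] at hxu
          intro h
          apply hxu
          rw [map_sub, map_one, h, sub_self]
      · -- left inverse : j (i v) = v
        intro v hv
        simp only [mem_coe, mem_filter, mem_univ, true_and] at hv
        obtain ⟨hG, hne⟩ := hv
        have hx1u : IsUnit (v.1 - 1) := by
          rw [isUnit_iff_red p k hk0, map_sub, map_one]
          intro h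
          exact hne (by linear_combination h)
        have hv' : (v.1 - 1) * (v.1 - 1)⁻¹ = 1 := ZMod.mul_inv_of_unit _ hx1u
        have hv'u : IsUnit ((v.1 - 1)⁻¹) :=
          IsUnit.of_mul_eq_one (v.1 - 1) (by linear_combination hv')
        have hd2 : (E * v.2 * (v.1 - 1)⁻¹) ^ 2 - E = (2 * E) * ((v.1 - 1)⁻¹) := by
          linear_combination (-(E * ((v.1 - 1)⁻¹) ^ 2)) * hG
            + (E * ((v.1 - 1)⁻¹) * (v.1 + 1) + E) * hv'
        have hdu : IsUnit ((E * v.2 * (v.1 - 1)⁻¹) ^ 2 - E) := by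
          rw [hd2]; exact h2E.mul hv'u
        refine Prod.ext ?_ ?_
        · show ((E * v.2 * (v.1 - 1)⁻¹) ^ 2 + E) * ((E * v.2 * (v.1 - 1)⁻¹) ^ 2 - E)⁻¹ = v.1
          apply mul_inv_eq_of_eq_mul hdu
          linear_combination (1 - v.1) * hd2 + (-(2 * E)) * hv'
        · show 2 * (E * v.2 * (v.1 - 1)⁻¹) * ((E * v.2 * (v.1 - 1)⁻¹) ^ 2 - E)⁻¹ = v.2
          apply mul_inv_eq_of_eq_mul hdu
          linear_combination (-v.2) * hd2
      · -- right inverse : i (j t) = t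
        intro t _
        have hdu : IsUnit (t ^ 2 - E) := tsq_sub_eps_unit p k hk0 ε hε t
        have hd : (t ^ 2 - E) * (t ^ 2 - E)⁻¹ = 1 := ZMod.mul_inv_of_unit _ hdu
        have h5 : ((t ^ 2 + E) * (t ^ 2 - E)⁻¹ - 1) * (t ^ 2 - E) = 2 * E := by
          linear_combination (t ^ 2 + E) * hd
        have hxu : IsUnit ((t ^ 2 + E) * (t ^ 2 - E)⁻¹ - 1) := by
          have h6 := h2E
          rw [← h5] at h6
          exact isUnit_of_mul_isUnit_left h6
        show E * (2 * t * (t ^ 2 - E)⁻¹) * ((t ^ 2 + E) * (t ^ 2 - E)⁻¹ - 1)⁻¹ = t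
        apply mul_inv_eq_of_eq_mul hxu
        linear_combination (-t) * hd
    rw [hbij, Finset.card_univ, ZMod.card]
  omega

lemma card_sol (hodd : Odd p) (hk : 1 ≤ k) (ε : ℤ) (hε : ¬ IsSquare ((ε : ZMod p)))
    (c : (ZMod (p ^ k))ˣ) :
    (univ.filter (fun v : ZMod (p ^ k) × ZMod (p ^ k) =>
      v.1 ^ 2 - (ε : ZMod (p ^ k)) * v.2 ^ 2 = (c : ZMod (p ^ k)))).card
    = (univ.filter (fun v : ZMod (p ^ k) × ZMod (p ^ k) =>
      v.1 ^ 2 - (ε : ZMod (p ^ k)) * v.2 ^ 2 = 1)).card := by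
  classical
  have hk0 : k ≠ 0 := by omega
  set E : ZMod (p ^ k) := (ε : ZMod (p ^ k)) with hEdef
  obtain ⟨a₀, b₀, h₀⟩ := exists_sol p k hodd hk0 ε hε c
  set w : ZMod (p ^ k) := ((c⁻¹ : (ZMod (p ^ k))ˣ) : ZMod (p ^ k)) with hwdef
  have hw : (c : ZMod (p ^ k)) * w = 1 := by
    rw [hwdef]; exact_mod_cast c.mul_inv
  apply Finset.card_nbij'
    (i := fun v : ZMod (p ^ k) × ZMod (p ^ k) =>
      ((v.1 * a₀ - E * v.2 * b₀) * w, (v.2 * a₀ - v.1 * b₀) * w))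
    (j := fun u : ZMod (p ^ k) × ZMod (p ^ k) =>
      (a₀ * u.1 + E * b₀ * u.2, a₀ * u.2 + b₀ * u.1))
  · intro v hv
    simp only [mem_coe, mem_filter, mem_univ, true_and] at hv ⊢
    have e1 : ((v.1 * a₀ - E * v.2 * b₀) * w) ^ 2 - E * ((v.2 * a₀ - v.1 * b₀) * w) ^ 2
        = (v.1 ^ 2 - E * v.2 ^ 2) * (a₀ ^ 2 - E * b₀ ^ 2) * w ^ 2 := by ring
    rw [e1, hv, h₀]
    linear_combination ((c : ZMod (p ^ k)) * w + 1) * hw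
  · intro u hu
    simp only [mem_coe, mem_filter, mem_univ, true_and] at hu ⊢
    have e1 : (a₀ * u.1 + E * b₀ * u.2) ^ 2 - E * (a₀ * u.2 + b₀ * u.1) ^ 2
        = (a₀ ^ 2 - E * b₀ ^ 2) * (u.1 ^ 2 - E * u.2 ^ 2) := by ring
    rw [e1, h₀, hu, mul_one]
  · intro v hv
    simp only [mem_coe, mem_filter, mem_univ, true_and] at hv
    refine Prod.ext ?_ ?_
    · show a₀ * ((v.1 * a₀ - E * v.2 * b₀) * w) + E * b₀ * ((v.2 * a₀ - v.1 * b₀) * w) = v.1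
      have e1 : a₀ * ((v.1 * a₀ - E * v.2 * b₀) * w) + E * b₀ * ((v.2 * a₀ - v.1 * b₀) * w)
          = v.1 * ((a₀ ^ 2 - E * b₀ ^ 2) * w) := by ring
      rw [e1, h₀, hw, mul_one]
    · show a₀ * ((v.2 * a₀ - v.1 * b₀) * w) + b₀ * ((v.1 * a₀ - E * v.2 * b₀) * w) = v.2
      have e1 : a₀ * ((v.2 * a₀ - v.1 * b₀) * w) + b₀ * ((v.1 * a₀ - E * v.2 * b₀) * w)
          = v.2 * ((a₀ ^ 2 - E * b₀ ^ 2) * w) := by ring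
      rw [e1, h₀, hw, mul_one]
  · intro u hu
    simp only [mem_coe, mem_filter, mem_univ, true_and] at hu
    refine Prod.ext ?_ ?_
    · show ((a₀ * u.1 + E * b₀ * u.2) * a₀ - E * (a₀ * u.2 + b₀ * u.1) * b₀) * w = u.1
      have e1 : ((a₀ * u.1 + E * b₀ * u.2) * a₀ - E * (a₀ * u.2 + b₀ * u.1) * b₀) * w
          = u.1 * ((a₀ ^ 2 - E * b₀ ^ 2) * w) := by ring
      rw [e1, h₀, hw, mul_one]
    · show ((a₀ * u.2 + b₀ * u.1) * a₀ - (a₀ * u.1 + E * b₀ * u.2) * b₀) * w = u.2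
      have e1 : ((a₀ * u.2 + b₀ * u.1) * a₀ - (a₀ * u.1 + E * b₀ * u.2) * b₀) * w
          = u.2 * ((a₀ ^ 2 - E * b₀ ^ 2) * w) := by ring
      rw [e1, h₀, hw, mul_one]

lemma sum_vanish (hodd : Odd p) (hk : 1 ≤ k) (ε : ℤ) (hε : ¬ IsSquare ((ε : ZMod p)))
    (c : (ZMod (p ^ k))ˣ) :
    ∑ v ∈ univ.filter (fun v : ZMod (p ^ k) × ZMod (p ^ k) =>
        v.1 ^ 2 - (ε : ZMod (p ^ k)) * v.2 ^ 2 = (c : ZMod (p ^ k))),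
      (v.1 ^ 2 + (ε : ZMod (p ^ k)) * v.2 ^ 2) = 0 := by
  classical
  have hk0 : k ≠ 0 := by omega
  set E : ZMod (p ^ k) := (ε : ZMod (p ^ k)) with hEdef
  set S := univ.filter (fun v : ZMod (p ^ k) × ZMod (p ^ k) =>
    v.1 ^ 2 - E * v.2 ^ 2 = (c : ZMod (p ^ k))) with hSdef
  have h1mE : IsUnit (1 - E) := by
    rw [isUnit_iff_red p k hk0, map_sub, map_one, hEdef, red_eps]
    intro h
    exact hε ⟨1, by linear_combination -h⟩
  obtain ⟨u, hu⟩ := h1mE.exists_right_inv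
  have huu : IsUnit u := IsUnit.of_mul_eq_one (1 - E) (by linear_combination hu)
  set X : ZMod (p ^ k) := (1 + E) * u with hX
  set Y : ZMod (p ^ k) := 2 * u with hY
  have hxy : X ^ 2 - E * Y ^ 2 = 1 := by
    rw [hX, hY]; linear_combination ((1 - E) * u + 1) * hu
  set F := ∑ v ∈ S, (v.1 ^ 2 + E * v.2 ^ 2) with hF
  set G := ∑ v ∈ S, (v.1 * v.2) with hG
  have hmemT : ∀ v ∈ S, (v.1 * X + E * v.2 * Y, v.1 * Y + v.2 * X) ∈ S := by
    intro v hv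
    rw [hSdef, mem_filter] at hv ⊢
    refine ⟨mem_univ _, ?_⟩
    have e1 : (v.1 * X + E * v.2 * Y) ^ 2 - E * (v.1 * Y + v.2 * X) ^ 2
        = (v.1 ^ 2 - E * v.2 ^ 2) * (X ^ 2 - E * Y ^ 2) := by ring
    rw [e1, hv.2, hxy, mul_one]
  have hmemT' : ∀ v ∈ S, (v.1 * X - E * v.2 * Y, -(v.1 * Y) + v.2 * X) ∈ S := by
    intro v hv
    rw [hSdef, mem_filter] at hv ⊢
    refine ⟨mem_univ _, ?_⟩
    have e1 : (v.1 * X - E * v.2 * Y) ^ 2 - E * (-(v.1 * Y) + v.2 * X) ^ 2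
        = (v.1 ^ 2 - E * v.2 ^ 2) * (X ^ 2 - E * Y ^ 2) := by ring
    rw [e1, hv.2, hxy, mul_one]
  -- generic transport of a sum along the bijection v ↦ v * (X + Y √ε)
  have htrans : ∀ f : ZMod (p ^ k) × ZMod (p ^ k) → ZMod (p ^ k),
      ∑ v ∈ S, f v = ∑ v ∈ S, f (v.1 * X + E * v.2 * Y, v.1 * Y + v.2 * X) := by
    intro f
    apply Finset.sum_nbij'
      (i := fun v : ZMod (p ^ k) × ZMod (p ^ k) => (v.1 * X - E * v.2 * Y, -(v.1 * Y) + v.2 * X))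
      (j := fun v : ZMod (p ^ k) × ZMod (p ^ k) => (v.1 * X + E * v.2 * Y, v.1 * Y + v.2 * X))
      hmemT' hmemT
    · intro v _
      refine Prod.ext ?_ ?_
      · show (v.1 * X - E * v.2 * Y) * X + E * (-(v.1 * Y) + v.2 * X) * Y = v.1
        linear_combination v.1 * hxy
      · show (v.1 * X - E * v.2 * Y) * Y + (-(v.1 * Y) + v.2 * X) * X = v.2
        linear_combination v.2 * hxy
    · intro v _
      refine Prod.ext ?_ ?_
      · show (v.1 * X + E * v.2 * Y) * X - E * (v.1 * Y + v.2 * X) * Y = v.1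
        linear_combination v.1 * hxy
      · show -((v.1 * X + E * v.2 * Y) * Y) + (v.1 * Y + v.2 * X) * X = v.2
        linear_combination v.2 * hxy
    · intro v hv
      congr 1
      refine Prod.ext ?_ ?_
      · show v.1 = (v.1 * X - E * v.2 * Y) * X + E * (-(v.1 * Y) + v.2 * X) * Y
        linear_combination (-v.1) * hxy
      · show v.2 = (v.1 * X - E * v.2 * Y) * Y + (-(v.1 * Y) + v.2 * X) * X
        linear_combination (-v.2) * hxy
  have EQ1 : F = (X ^ 2 + E * Y ^ 2) * F + (4 * E * X * Y) * G := by
    rw [hF, hG]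
    calc ∑ v ∈ S, (v.1 ^ 2 + E * v.2 ^ 2)
        = ∑ v ∈ S, ((v.1 * X + E * v.2 * Y) ^ 2 + E * (v.1 * Y + v.2 * X) ^ 2) :=
          htrans (fun v => v.1 ^ 2 + E * v.2 ^ 2)
      _ = ∑ v ∈ S, ((X ^ 2 + E * Y ^ 2) * (v.1 ^ 2 + E * v.2 ^ 2)
            + (4 * E * X * Y) * (v.1 * v.2)) := by
          refine Finset.sum_congr rfl fun v _ => by ring
      _ = (X ^ 2 + E * Y ^ 2) * (∑ v ∈ S, (v.1 ^ 2 + E * v.2 ^ 2))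
            + (4 * E * X * Y) * (∑ v ∈ S, (v.1 * v.2)) := by
          rw [Finset.sum_add_distrib, ← Finset.mul_sum, ← Finset.mul_sum]
  have EQ2 : G = (X * Y) * F + (X ^ 2 + E * Y ^ 2) * G := by
    rw [hF, hG]
    calc ∑ v ∈ S, (v.1 * v.2)
        = ∑ v ∈ S, ((v.1 * X + E * v.2 * Y) * (v.1 * Y + v.2 * X)) :=
          htrans (fun v => v.1 * v.2)
      _ = ∑ v ∈ S, ((X * Y) * (v.1 ^ 2 + E * v.2 ^ 2)
            + (X ^ 2 + E * Y ^ 2) * (v.1 * v.2)) := by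
          refine Finset.sum_congr rfl fun v _ => by ring
      _ = (X * Y) * (∑ v ∈ S, (v.1 ^ 2 + E * v.2 ^ 2))
            + (X ^ 2 + E * Y ^ 2) * (∑ v ∈ S, (v.1 * v.2)) := by
          rw [Finset.sum_add_distrib, ← Finset.mul_sum, ← Finset.mul_sum]
  have key : (4 * E * Y ^ 2) * F = 0 := by
    linear_combination ((X ^ 2 + E * Y ^ 2) - 1) * EQ1 - (4 * E * X * Y) * EQ2
      + ((X ^ 2 - E * Y ^ 2 - 1) * F) * hxy
  have hbig : IsUnit (4 * E * Y ^ 2) := by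
    have h2u := two_unit p k hodd hk0
    have hEu := heps_unit p k hk0 ε hε
    have : 4 * E * Y ^ 2 = 2 * 2 * 2 * 2 * (E * (u * u)) := by rw [hY]; ring
    rw [this]
    exact ((((h2u.mul h2u).mul h2u).mul h2u)).mul (hEu.mul (huu.mul huu))
  exact (IsUnit.mul_right_eq_zero hbig).mp key

end SumSqAux

/-- For every unit `c` of `ℤ/p^kℤ`, one has `2·ε·Σ b² = −(p+1)·p^(k-1)·c` in `ℤ/p^kℤ`, where the
sum runs over all pairs `(a, b) ∈ (ℤ/p^kℤ)²` with `a² − εb² = c`. -/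
theorem sum_sq_snd_eq (p k : ℕ) [hp : Fact p.Prime] (hodd : Odd p) (hk : 1 ≤ k)
    (ε : ℤ) (hε : ¬ IsSquare (ε : ZMod p)) (c : (ZMod (p ^ k))ˣ) :
    2 * (ε : ZMod (p ^ k)) * ∑ v ∈ Finset.univ.filter
        (fun v : ZMod (p ^ k) × ZMod (p ^ k) =>
          v.1 ^ 2 - (ε : ZMod (p ^ k)) * v.2 ^ 2 = (c : ZMod (p ^ k))), v.2 ^ 2
      = -((((p + 1) * p ^ (k - 1) : ℕ) : ZMod (p ^ k)) * (c : ZMod (p ^ k))) := by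
  classical
  set E : ZMod (p ^ k) := (ε : ZMod (p ^ k)) with hEdef
  set S := Finset.univ.filter (fun v : ZMod (p ^ k) × ZMod (p ^ k) =>
    v.1 ^ 2 - E * v.2 ^ 2 = (c : ZMod (p ^ k))) with hSdef
  have hcard : S.card = p ^ k + p ^ (k - 1) :=
    (SumSqAux.card_sol p k hodd (by omega) ε hε c).trans
      (SumSqAux.card_norm_one p k hodd hk ε hε)
  have hF : ∑ v ∈ S, (v.1 ^ 2 + E * v.2 ^ 2) = 0 :=
    SumSqAux.sum_vanish p k hodd hk ε hε c
  have hNorm : ∑ v ∈ S, (v.1 ^ 2 - E * v.2 ^ 2) = (S.card : ZMod (p ^ k)) * c := by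
    rw [Finset.sum_congr rfl (fun v hv => (Finset.mem_filter.mp hv).2),
      Finset.sum_const, nsmul_eq_mul]
  have hNnat : (p + 1) * p ^ (k - 1) = p ^ k + p ^ (k - 1) := by
    rw [add_mul, one_mul, ← pow_succ', Nat.sub_add_cancel hk]
  calc 2 * E * ∑ v ∈ S, v.2 ^ 2
      = ∑ v ∈ S, (2 * E * v.2 ^ 2) := by rw [Finset.mul_sum]
    _ = ∑ v ∈ S, ((v.1 ^ 2 + E * v.2 ^ 2) - (v.1 ^ 2 - E * v.2 ^ 2)) :=
        Finset.sum_congr rfl fun v _ => by ring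
    _ = (∑ v ∈ S, (v.1 ^ 2 + E * v.2 ^ 2)) - ∑ v ∈ S, (v.1 ^ 2 - E * v.2 ^ 2) :=
        Finset.sum_sub_distrib _ _
    _ = -((S.card : ZMod (p ^ k)) * c) := by rw [hF, hNorm, zero_sub]
    _ = -((((p + 1) * p ^ (k - 1) : ℕ) : ZMod (p ^ k)) * (c : ZMod (p ^ k))) := by
        rw [hcard, hNnat]
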